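/- Online-to-minimax guarantee for simulator learning: Let P be the true transition kernel of a finite MDP (reward r with 0 ≤ r ≤ R_max, discount γ ∈ (0,1), initial distribution ρ₀), let 𝓜 be a nonempty set of transition kernels, let π_1, …, π_T be stationary policies, and let P̂_1, …, P̂_T ∈ 𝓜. For a kernel Q define the round-t loss ℓ_t(Q) = Σ_{(s,a)} d̄_{π_t}(s,a)·KL(P(·|s,a) ‖ Q(·|s,a)) (normalized occupancy under the true kernel P), and assume all values ℓ_t(Q) for Q ∈ 𝓜 ∪ {P̂_1,…,P̂_T} are finite. Define Regret_T = Σ_{t=1}^T ℓ_t(P̂_t) − inf_{Q∈𝓜} Σ_{t=1}^T ℓ_t(Q) and Δ_t = |V_{π_t}(P) − V_{π_t}(P̂_t)|. Then (1/T)·Σ_{t=1}^T Δ_t ≤ (γ·R_max/(1−γ)²) · sqrt( (1/2)·( inf_{Q∈𝓜} (1/T) Σ_{t=1}^T ℓ_t(Q) + Regret_T/T ) ). -/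

import Mathlib

open Finset Real Pointwise

/-- `p` is a probability mass function on a finite type. -/
def IsPMF {X : Type*} [Fintype X] (p : X → ℝ) : Prop :=
  (∀ x, 0 ≤ p x) ∧ ∑ x, p x = 1

/-- `P` is a transition kernel: each `P s a` is a pmf on states. -/
def IsKernel {S A : Type*} [Fintype S] [Fintype A] (P : S → A → S → ℝ) : Prop :=
  ∀ s a, IsPMF (P s a)

/-- `pol` is a stationary policy: each `pol s` is a pmf on actions. -/
def IsPolicy {S A : Type*} [Fintype S] [Fintype A] (pol : S → A → ℝ) : Prop :=
  ∀ s, IsPMF (pol s)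

/-- `V` satisfies the Bellman evaluation equation for policy `pol` under kernel `P`,
reward `r` and discount `γ`. -/
def IsValue {S A : Type*} [Fintype S] [Fintype A] (P : S → A → S → ℝ) (pol : S → A → ℝ)
    (r : S → A → ℝ) (γ : ℝ) (V : S → ℝ) : Prop :=
  ∀ s, V s = ∑ a, pol s a * (r s a + γ * ∑ s', P s a s' * V s')

/-- `d` is the (unnormalized) discounted state-action occupancy of `pol` under kernel `P`
with initial distribution `ρ₀` and discount `γ`. -/
def IsOcc {S A : Type*} [Fintype S] [Fintype A] (P : S → A → S → ℝ) (pol : S → A → ℝ)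
    (ρ₀ : S → ℝ) (γ : ℝ) (d : S → A → ℝ) : Prop :=
  ∀ s a, d s a = pol s a * (ρ₀ s + γ * ∑ x : S × A, d x.1 x.2 * P x.1 x.2 s)

/-- ℓ₁ distance between two pmfs on a finite type. -/
noncomputable def l1Dist {X : Type*} [Fintype X] (p q : X → ℝ) : ℝ :=
  ∑ x, |p x - q x|

/-- Total variation distance between two pmfs on a finite type. -/
noncomputable def tvDist {X : Type*} [Fintype X] (p q : X → ℝ) : ℝ :=
  (1 / 2) * ∑ x, |p x - q x|

/-- Kullback-Leibler divergence between two pmfs on a finite type (finite under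
absolute continuity). -/
noncomputable def klF {X : Type*} [Fintype X] (p q : X → ℝ) : ℝ :=
  ∑ x, p x * Real.log (p x / q x)

/-- `d_data` satisfies κ-coverage for the policy set `Pol` under kernel `P`:
every occupancy of a policy in `Pol` is dominated by `κ · d_data`. -/
def KappaCoverage {S A : Type*} [Fintype S] [Fintype A] (P : S → A → S → ℝ) (ρ₀ : S → ℝ)
    (γ : ℝ) (Pol : Set (S → A → ℝ)) (ddata : S → A → ℝ) (κ : ℝ) : Prop :=
  ∀ pol ∈ Pol, ∀ dpol : S → A → ℝ, IsOcc P pol ρ₀ γ dpol → ∀ s a, dpol s a ≤ κ * ddata s a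

/-- Critic discrepancy `Δ_{D,P̂}(s,a)`. -/
noncomputable def critDelta {S A : Type*} [Fintype S] (P Phat : S → A → S → ℝ)
    (D : S → A → S → ℝ) (s : S) (a : A) : ℝ :=
  (∑ s', P s a s' * D s a s') - ∑ s', Phat s a s' * D s a s'

/-- Supremum over the critic class of the critic discrepancy at `(s,a)`. -/
noncomputable def critSup {S A : Type*} [Fintype S] (𝒟 : Set (S → A → S → ℝ))
    (P Phat : S → A → S → ℝ) (s : S) (a : A) : ℝ :=
  sSup {y | ∃ D ∈ 𝒟, y = critDelta P Phat D s a}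

noncomputable def gfun (t : ℝ) : ℝ := t * Real.log t - t + 1 - 3*(t-1)^2/(2*(t+2))
noncomputable def hfun (t : ℝ) : ℝ := Real.log t - 3*((t-1)*(t+5))/(2*(t+2)^2)

lemma hasDerivAt_gfun {t : ℝ} (ht : 0 < t) : HasDerivAt gfun (hfun t) t := by
  have hne : t ≠ 0 := ne_of_gt ht
  have hden : (2*(t+2)) ≠ 0 := by positivity
  have h1 : HasDerivAt (fun t : ℝ => t * Real.log t) (Real.log t + 1) t := by
    have := (hasDerivAt_id t).mul (Real.hasDerivAt_log hne)
    exact this.congr_deriv (by simp [hne])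
  have h2 : HasDerivAt (fun t : ℝ => 3*(t-1)^2/(2*(t+2)))
      ((6*(t-1)*(2*(t+2)) - 3*(t-1)^2*2)/(2*(t+2))^2) t := by
    have hnum : HasDerivAt (fun t : ℝ => 3*(t-1)^2) (6*(t-1)) t := by
      have : HasDerivAt (fun t : ℝ => (t-1)) 1 t := (hasDerivAt_id t).sub_const 1
      have := (this.pow 2).const_mul 3
      exact this.congr_deriv (by ring)
    have hden' : HasDerivAt (fun t : ℝ => 2*(t+2)) 2 t := by
      have : HasDerivAt (fun t : ℝ => (t+2)) 1 t := (hasDerivAt_id t).add_const 2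
      have := this.const_mul 2
      exact this.congr_deriv (by ring)
    exact hnum.div hden' hden
  have := (h1.sub_const 0)
  have hg : HasDerivAt gfun ((Real.log t + 1) - 1 -
      ((6*(t-1)*(2*(t+2)) - 3*(t-1)^2*2)/(2*(t+2))^2)) t := by
    have := ((h1.sub (hasDerivAt_id t)).add_const 1).sub h2
    exact this
  have heq : (Real.log t + 1) - 1 - ((6*(t-1)*(2*(t+2)) - 3*(t-1)^2*2)/(2*(t+2))^2) = hfun t := by
    unfold hfun
    have h2ne : ((2:ℝ)*(t+2))^2 ≠ 0 := pow_ne_zero _ hden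
    field_simp
    ring
  rw [heq] at hg; exact hg

lemma hasDerivAt_hfun {t : ℝ} (ht : 0 < t) : HasDerivAt hfun (1/t - 27/(t+2)^3) t := by
  have hne : t ≠ 0 := ne_of_gt ht
  have hden : (2*(t+2)^2) ≠ 0 := by positivity
  have h1 : HasDerivAt (fun t : ℝ => Real.log t) (1/t) t := by
    simpa [one_div] using Real.hasDerivAt_log hne
  have hnum : HasDerivAt (fun t : ℝ => 3*((t-1)*(t+5))) (3*(2*t+4)) t := by
    have ha : HasDerivAt (fun t : ℝ => (t-1)) 1 t := (hasDerivAt_id t).sub_const 1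
    have hb : HasDerivAt (fun t : ℝ => (t+5)) 1 t := (hasDerivAt_id t).add_const 5
    have := (ha.mul hb).const_mul 3
    exact this.congr_deriv (by ring)
  have hden' : HasDerivAt (fun t : ℝ => 2*(t+2)^2) (2*(2*(t+2))) t := by
    have : HasDerivAt (fun t : ℝ => (t+2)) 1 t := (hasDerivAt_id t).add_const 2
    have := (this.pow 2).const_mul 2
    exact this.congr_deriv (by ring)
  have h2 := hnum.div hden' hden
  have hg := h1.sub h2
  have heq : 1/t - (3*(2*t+4)*(2*(t+2)^2) - 3*((t-1)*(t+5))*(2*(2*(t+2))))/(2*(t+2)^2)^2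
      = 1/t - 27/(t+2)^3 := by
    have : (t+2) ≠ 0 := by positivity
    field_simp
    ring
  rw [heq] at hg; exact hg

lemma gfun_nonneg {t : ℝ} (ht : 0 ≤ t) : 0 ≤ gfun t := by
  rcases eq_or_lt_of_le ht with h0 | h0
  · simp [gfun, ← h0]; norm_num
  -- h monotone on Ioi 0
  have hmono : MonotoneOn hfun (Set.Ioi (0:ℝ)) := by
    apply monotoneOn_of_deriv_nonneg (convex_Ioi 0)
    · intro x hx
      exact (hasDerivAt_hfun hx).continuousAt.continuousWithinAt
    · intro x hx
      rw [interior_Ioi] at hx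
      exact (hasDerivAt_hfun hx).differentiableAt.differentiableWithinAt
    · intro x hx
      rw [interior_Ioi] at hx
      have hx0 : (0:ℝ) < x := hx
      rw [(hasDerivAt_hfun hx).deriv]
      rw [sub_nonneg, div_le_div_iff₀ (by positivity) (by positivity)]
      nlinarith [sq_nonneg (x-1), hx0.le, sq_nonneg x]
  have h1 : hfun 1 = 0 := by simp [hfun]
  have hcont : ∀ x ∈ Set.Ioi (0:ℝ), ContinuousAt gfun x := fun x hx =>
    (hasDerivAt_gfun hx).continuousAt
  rcases le_total t 1 with hle | hge
  · -- antitone on Icc t 1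
    have hanti : AntitoneOn gfun (Set.Icc t 1) := by
      apply antitoneOn_of_deriv_nonpos (convex_Icc t 1)
      · intro x hx
        exact (hcont x (lt_of_lt_of_le h0 hx.1)).continuousWithinAt
      · intro x hx
        rw [interior_Icc] at hx
        exact (hasDerivAt_gfun (lt_of_lt_of_le h0 hx.1.le)).differentiableAt.differentiableWithinAt
      · intro x hx
        rw [interior_Icc] at hx
        rw [(hasDerivAt_gfun (lt_trans h0 hx.1)).deriv]
        have := hmono (Set.mem_Ioi.2 (lt_trans h0 hx.1)) (Set.mem_Ioi.2 one_pos) hx.2.le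
        rw [h1] at this; exact this
    have := hanti (Set.mem_Icc.2 ⟨le_refl t, hle⟩) (Set.mem_Icc.2 ⟨hle, le_refl 1⟩) hle
    have hg1 : gfun 1 = 0 := by simp [gfun]
    linarith [this, hg1.symm.le]
  · have hmono2 : MonotoneOn gfun (Set.Icc 1 t) := by
      apply monotoneOn_of_deriv_nonneg (convex_Icc 1 t)
      · intro x hx
        exact (hcont x (lt_of_lt_of_le one_pos hx.1)).continuousWithinAt
      · intro x hx
        rw [interior_Icc] at hx
        exact (hasDerivAt_gfun (lt_of_le_of_lt one_pos.le hx.1)).differentiableAt.differentiableWithinAt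
      · intro x hx
        rw [interior_Icc] at hx
        rw [(hasDerivAt_gfun (lt_of_le_of_lt one_pos.le hx.1)).deriv]
        have := hmono (Set.mem_Ioi.2 one_pos) (Set.mem_Ioi.2 (lt_of_le_of_lt one_pos.le hx.1)) hx.1.le
        rw [h1] at this; exact this
    have := hmono2 (Set.mem_Icc.2 ⟨le_refl 1, hge⟩) (Set.mem_Icc.2 ⟨hge, le_refl t⟩) hge
    have hg1 : gfun 1 = 0 := by simp [gfun]
    linarith [this, hg1.symm.le]

lemma phi_ineq {t : ℝ} (ht : 0 ≤ t) : 3*(t-1)^2/(2*(t+2)) ≤ t * Real.log t - t + 1 := by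
  have := gfun_nonneg ht
  unfold gfun at this
  linarith
section Pinsker
variable {X : Type*} [Fintype X] {p q : X → ℝ}

-- pointwise lower bound on KL integrand
lemma kl_pointwise (hp : ∀ x, 0 ≤ p x) (hq : ∀ x, 0 ≤ q x)
    (habs : ∀ x, 0 < p x → 0 < q x) (x : X) :
    3*(p x - q x)^2/(2*(p x + 2*q x)) ≤ p x * Real.log (p x / q x) - p x + q x := by
  rcases eq_or_lt_of_le (hq x) with hq0 | hq0
  · have hp0 : p x = 0 := by
      by_contra h
      have := habs x (lt_of_le_of_ne (hp x) (Ne.symm h))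
      exact absurd this (by rw [← hq0]; exact lt_irrefl 0)
    rw [hp0, ← hq0]; norm_num
  · have ht : 0 ≤ p x / q x := div_nonneg (hp x) hq0.le
    have key := phi_ineq ht
    have hqne : q x ≠ 0 := ne_of_gt hq0
    -- multiply by q x
    have := mul_le_mul_of_nonneg_left key hq0.le
    have hpq : (0:ℝ) < p x + 2*q x := by nlinarith [hp x]
    calc 3*(p x - q x)^2/(2*(p x + 2*q x))
        = q x * (3*(p x / q x - 1)^2/(2*(p x / q x + 2))) := by
          field_simp
      _ ≤ q x * (p x / q x * Real.log (p x / q x) - p x / q x + 1) := this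
      _ = p x * Real.log (p x / q x) - p x + q x := by
          field_simp

lemma kl_ge_quad (hp : IsPMF p) (hq : IsPMF q) (habs : ∀ x, 0 < p x → 0 < q x) :
    ∑ x, 3*(p x - q x)^2/(2*(p x + 2*q x)) ≤ klF p q := by
  have h1 : ∑ x, (p x * Real.log (p x / q x) - p x + q x) = klF p q := by
    simp [klF, Finset.sum_add_distrib, Finset.sum_sub_distrib, hp.2, hq.2]
  rw [← h1]
  exact Finset.sum_le_sum fun x _ => kl_pointwise hp.1 hq.1 habs x

lemma klF_nonneg (hp : IsPMF p) (hq : IsPMF q) (habs : ∀ x, 0 < p x → 0 < q x) :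
    0 ≤ klF p q := by
  refine le_trans ?_ (kl_ge_quad hp hq habs)
  apply Finset.sum_nonneg
  intro x _
  have h1 := hp.1 x
  have h2 := hq.1 x
  positivity

lemma pinsker (hp : IsPMF p) (hq : IsPMF q) (habs : ∀ x, 0 < p x → 0 < q x) :
    (∑ x, |p x - q x|)^2 ≤ 2 * klF p q := by
  set r : X → ℝ := fun x => 3*(p x - q x)^2/(2*(p x + 2*q x)) with hr
  set u : X → ℝ := fun x => 2*(p x + 2*q x)/3 with hu
  have hrn : ∀ x, 0 ≤ r x := fun x => by
    have := hp.1 x; have := hq.1 x; positivity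
  have hun : ∀ x, 0 ≤ u x := fun x => by
    have := hp.1 x; have := hq.1 x; positivity
  have habs' : ∀ x, |p x - q x| = Real.sqrt (r x) * Real.sqrt (u x) := by
    intro x
    rw [← Real.sqrt_mul (hrn x)]
    rcases eq_or_lt_of_le (add_nonneg (hp.1 x) (mul_nonneg two_pos.le (hq.1 x))) with h0 | h0
    · -- both zero
      have hp0 : p x = 0 := by nlinarith [hp.1 x, hq.1 x]
      have hq0 : q x = 0 := by nlinarith [hp.1 x, hq.1 x]
      simp [hr, hu, hp0, hq0]
    · have hne : p x + 2*q x ≠ 0 := ne_of_gt h0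
      have : r x * u x = (p x - q x)^2 := by
        simp only [hr, hu]
        field_simp
        exact mul_div_cancel_right₀ _ (by intro h; apply hne; linarith)
      rw [this, Real.sqrt_sq_eq_abs]
  have hCS := Finset.sum_mul_sq_le_sq_mul_sq Finset.univ (fun x => Real.sqrt (r x))
    (fun x => Real.sqrt (u x))
  have hru : ∀ x, Real.sqrt (r x) ^ 2 = r x := fun x => Real.sq_sqrt (hrn x)
  have huu : ∀ x, Real.sqrt (u x) ^ 2 = u x := fun x => Real.sq_sqrt (hun x)
  have husum : ∑ x, u x = 2 := by
    have hx : ∀ x ∈ Finset.univ, u x = (2/3) * p x + (4/3) * q x := fun x _ => by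
      simp only [hu]; ring
    rw [Finset.sum_congr rfl hx, Finset.sum_add_distrib, ← Finset.mul_sum, ← Finset.mul_sum,
      hp.2, hq.2]
    norm_num
  have hsq : (∑ x, |p x - q x|)^2 ≤ (∑ x, r x) * 2 := by
    calc (∑ x, |p x - q x|)^2 = (∑ x, Real.sqrt (r x) * Real.sqrt (u x))^2 := by
          rw [Finset.sum_congr rfl (fun x _ => habs' x)]
      _ ≤ (∑ x, Real.sqrt (r x) ^ 2) * ∑ x, Real.sqrt (u x) ^ 2 := hCS
      _ = (∑ x, r x) * 2 := by
          rw [Finset.sum_congr rfl (fun x _ => hru x), Finset.sum_congr rfl (fun x _ => huu x),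
            husum]
  have := kl_ge_quad hp hq habs
  calc (∑ x, |p x - q x|)^2 ≤ (∑ x, r x) * 2 := hsq
    _ ≤ klF p q * 2 := by
        apply mul_le_mul_of_nonneg_right _ two_pos.le
        exact this
    _ = 2 * klF p q := by ring
end Pinsker
section MDP
variable {S A : Type*} [Fintype S] [Fintype A]
variable {P : S → A → S → ℝ} {pol : S → A → ℝ} {r : S → A → ℝ} {γ : ℝ} {ρ₀ : S → ℝ}

lemma value_bounds [Nonempty S] (hP : IsKernel P) (hpol : IsPolicy pol) {Rmax : ℝ}
    (hr : ∀ s a, 0 ≤ r s a ∧ r s a ≤ Rmax) (hγ0 : 0 < γ) (hγ1 : γ < 1)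
    {V : S → ℝ} (hV : IsValue P pol r γ V) : ∀ s, 0 ≤ V s ∧ V s ≤ Rmax / (1 - γ) := by
  obtain ⟨s₁, -, hs₁⟩ := Finset.exists_max_image Finset.univ V ⟨Classical.arbitrary S, mem_univ _⟩
  obtain ⟨s₀, -, hs₀⟩ := Finset.exists_min_image Finset.univ V ⟨Classical.arbitrary S, mem_univ _⟩
  set Mx := V s₁
  set mn := V s₀
  have hub : ∀ s, V s ≤ Rmax + γ * Mx := by
    intro s
    rw [hV s]
    have h1 : ∀ a ∈ Finset.univ, pol s a * (r s a + γ * ∑ s', P s a s' * V s')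
        ≤ pol s a * (Rmax + γ * Mx) := by
      intro a _
      apply mul_le_mul_of_nonneg_left _ ((hpol s).1 a)
      have h2 : ∑ s', P s a s' * V s' ≤ ∑ s', P s a s' * Mx := by
        apply Finset.sum_le_sum
        intro s' _
        exact mul_le_mul_of_nonneg_left (hs₁ s' (mem_univ _)) ((hP s a).1 s')
      have h3 : ∑ s', P s a s' * Mx = Mx := by
        rw [← Finset.sum_mul, (hP s a).2, one_mul]
      have := (hr s a).2
      nlinarith [h2, h3]
    calc ∑ a, pol s a * (r s a + γ * ∑ s', P s a s' * V s')
        ≤ ∑ a, pol s a * (Rmax + γ * Mx) := Finset.sum_le_sum h1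
      _ = Rmax + γ * Mx := by rw [← Finset.sum_mul, (hpol s).2, one_mul]
  have hlb : ∀ s, γ * mn ≤ V s := by
    intro s
    rw [hV s]
    have h1 : ∀ a ∈ Finset.univ, pol s a * (γ * mn)
        ≤ pol s a * (r s a + γ * ∑ s', P s a s' * V s') := by
      intro a _
      apply mul_le_mul_of_nonneg_left _ ((hpol s).1 a)
      have h2 : ∑ s', P s a s' * mn ≤ ∑ s', P s a s' * V s' := by
        apply Finset.sum_le_sum
        intro s' _
        exact mul_le_mul_of_nonneg_left (hs₀ s' (mem_univ _)) ((hP s a).1 s')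
      have h3 : ∑ s', P s a s' * mn = mn := by
        rw [← Finset.sum_mul, (hP s a).2, one_mul]
      have := (hr s a).1
      nlinarith [h2, h3]
    calc γ * mn = ∑ a, pol s a * (γ * mn) := by rw [← Finset.sum_mul, (hpol s).2, one_mul]
      _ ≤ _ := Finset.sum_le_sum h1
  have hMx : Mx ≤ Rmax / (1 - γ) := by
    have := hub s₁
    rw [le_div_iff₀ (by linarith)]
    nlinarith
  have hmn : 0 ≤ mn := by
    have := hlb s₀
    nlinarith
  intro s
  exact ⟨le_trans hmn (hs₀ s (mem_univ _)), le_trans (hs₁ s (mem_univ _)) hMx⟩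

/-- iterates -/
noncomputable def occSeq (P : S → A → S → ℝ) (pol : S → A → ℝ) (ρ₀ : S → ℝ) :
    ℕ → S × A → ℝ
  | 0 => fun x => pol x.1 x.2 * ρ₀ x.1
  | (k+1) => fun x => pol x.1 x.2 * ∑ y : S × A, occSeq P pol ρ₀ k y * P y.1 y.2 x.1

lemma occSeq_nonneg (hP : IsKernel P) (hpol : IsPolicy pol) (hρ : IsPMF ρ₀) :
    ∀ k x, 0 ≤ occSeq P pol ρ₀ k x := by
  intro k
  induction k with
  | zero => intro x; exact mul_nonneg ((hpol x.1).1 x.2) (hρ.1 x.1)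
  | succ k ih =>
    intro x
    apply mul_nonneg ((hpol x.1).1 x.2)
    apply Finset.sum_nonneg
    intro y _
    exact mul_nonneg (ih y) ((hP y.1 y.2).1 x.1)

lemma occSeq_mass (hP : IsKernel P) (hpol : IsPolicy pol) (hρ : IsPMF ρ₀) :
    ∀ k, ∑ x : S × A, occSeq P pol ρ₀ k x = 1 := by
  intro k
  induction k with
  | zero =>
    rw [Fintype.sum_prod_type]
    simp only [occSeq]
    calc ∑ s, ∑ a, pol s a * ρ₀ s = ∑ s, (∑ a, pol s a) * ρ₀ s := by
          simp [Finset.sum_mul]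
      _ = ∑ s, ρ₀ s := by
          apply Finset.sum_congr rfl; intro s _; rw [(hpol s).2, one_mul]
      _ = 1 := hρ.2
  | succ k ih =>
    rw [Fintype.sum_prod_type]
    simp only [occSeq]
    calc ∑ s, ∑ a, pol s a * ∑ y : S × A, occSeq P pol ρ₀ k y * P y.1 y.2 s
        = ∑ s, (∑ a, pol s a) * ∑ y : S × A, occSeq P pol ρ₀ k y * P y.1 y.2 s := by
          simp [Finset.sum_mul]
      _ = ∑ s, ∑ y : S × A, occSeq P pol ρ₀ k y * P y.1 y.2 s := by
          apply Finset.sum_congr rfl; intro s _; rw [(hpol s).2, one_mul]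
      _ = ∑ y : S × A, occSeq P pol ρ₀ k y * ∑ s, P y.1 y.2 s := by
          rw [Finset.sum_comm]
          apply Finset.sum_congr rfl; intro y _; rw [Finset.mul_sum]
      _ = ∑ y : S × A, occSeq P pol ρ₀ k y := by
          apply Finset.sum_congr rfl; intro y _; rw [(hP y.1 y.2).2, mul_one]
      _ = 1 := ih

lemma occSeq_le_one (hP : IsKernel P) (hpol : IsPolicy pol) (hρ : IsPMF ρ₀) (k : ℕ)
    (x : S × A) : occSeq P pol ρ₀ k x ≤ 1 := by
  have h := occSeq_mass hP hpol hρ k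
  rw [← h]
  exact Finset.single_le_sum (fun y _ => occSeq_nonneg hP hpol hρ k y) (mem_univ x)

noncomputable def occStar (P : S → A → S → ℝ) (pol : S → A → ℝ) (ρ₀ : S → ℝ) (γ : ℝ)
    (s : S) (a : A) : ℝ := ∑' k, γ ^ k * occSeq P pol ρ₀ k (s, a)

lemma occStar_summable (hP : IsKernel P) (hpol : IsPolicy pol) (hρ : IsPMF ρ₀)
    (hγ0 : 0 < γ) (hγ1 : γ < 1) (f : S × A → ℝ) (hf : ∀ x, 0 ≤ f x) (C : ℝ)
    (hfC : ∀ x, f x ≤ C) (x : S × A) :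
    Summable (fun k => γ ^ k * (occSeq P pol ρ₀ k x * f x)) := by
  apply Summable.of_nonneg_of_le
    (fun k => mul_nonneg (pow_nonneg hγ0.le k)
      (mul_nonneg (occSeq_nonneg hP hpol hρ k x) (hf x)))
    (fun k => ?_) ((summable_geometric_of_lt_one hγ0.le hγ1).mul_right (max C 0))
  have h1 : occSeq P pol ρ₀ k x * f x ≤ max C 0 := by
    calc occSeq P pol ρ₀ k x * f x ≤ 1 * f x :=
          mul_le_mul_of_nonneg_right (occSeq_le_one hP hpol hρ k x) (hf x)
      _ = f x := one_mul _
      _ ≤ max C 0 := le_max_of_le_left (hfC x)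
  exact mul_le_mul_of_nonneg_left h1 (pow_nonneg hγ0.le k)

lemma occStar_summable' (hP : IsKernel P) (hpol : IsPolicy pol) (hρ : IsPMF ρ₀)
    (hγ0 : 0 < γ) (hγ1 : γ < 1) (x : S × A) :
    Summable (fun k => γ ^ k * occSeq P pol ρ₀ k x) := by
  have := occStar_summable hP hpol hρ hγ0 hγ1 (fun _ => 1) (fun _ => one_pos.le) 1
    (fun _ => le_refl 1) x
  simpa using this

lemma occStar_isOcc (hP : IsKernel P) (hpol : IsPolicy pol) (hρ : IsPMF ρ₀)
    (hγ0 : 0 < γ) (hγ1 : γ < 1) : IsOcc P pol ρ₀ γ (occStar P pol ρ₀ γ) := by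
  intro s a
  have hsum := occStar_summable' hP hpol hρ hγ0 hγ1
  have key : occStar P pol ρ₀ γ s a
      = γ^0 * occSeq P pol ρ₀ 0 (s,a) + ∑' k, γ^(k+1) * occSeq P pol ρ₀ (k+1) (s,a) := by
    rw [occStar, Summable.tsum_eq_zero_add (hsum (s,a))]
  have h2 : ∑' k, γ^(k+1) * occSeq P pol ρ₀ (k+1) (s,a)
      = γ * (pol s a * ∑ y : S × A, occStar P pol ρ₀ γ y.1 y.2 * P y.1 y.2 s) := by
    have e1 : ∀ k, γ^(k+1) * occSeq P pol ρ₀ (k+1) (s,a)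
        = γ * (pol s a * ∑ y : S × A, (γ^k * occSeq P pol ρ₀ k y) * P y.1 y.2 s) := by
      intro k
      have h : ∑ y : S × A, (γ^k * occSeq P pol ρ₀ k y) * P y.1 y.2 s
          = γ^k * ∑ y : S × A, occSeq P pol ρ₀ k y * P y.1 y.2 s := by
        rw [Finset.mul_sum]
        exact Finset.sum_congr rfl fun y _ => by ring
      rw [h]
      simp only [occSeq]
      ring
    rw [tsum_congr e1]
    rw [tsum_mul_left]
    congr 1
    have e2 : ∀ k, pol s a * ∑ y : S × A, (γ^k * occSeq P pol ρ₀ k y) * P y.1 y.2 s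
        = ∑ y : S × A, pol s a * ((γ^k * occSeq P pol ρ₀ k y) * P y.1 y.2 s) := by
      intro k; rw [Finset.mul_sum]
    rw [tsum_congr e2]
    have hsummable : ∀ y : S × A, y ∈ Finset.univ → Summable
        (fun k => pol s a * ((γ^k * occSeq P pol ρ₀ k y) * P y.1 y.2 s)) := by
      intro y _
      apply Summable.mul_left
      have := occStar_summable hP hpol hρ hγ0 hγ1 (fun z => P z.1 z.2 s)
        (fun z => (hP z.1 z.2).1 s) 1 (fun z => ?_) y
      · exact this.congr fun k => by ring
      · calc P z.1 z.2 s ≤ ∑ s', P z.1 z.2 s' :=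
            Finset.single_le_sum (fun s' _ => (hP z.1 z.2).1 s') (mem_univ s)
          _ = 1 := (hP z.1 z.2).2
    rw [Summable.tsum_finsetSum hsummable]
    rw [Finset.mul_sum]
    apply Finset.sum_congr rfl
    intro y _
    rw [tsum_mul_left]
    congr 1
    rw [occStar, ← tsum_mul_right]
    try exact tsum_congr fun k => by simp only [Prod.mk.eta]
  rw [key, h2]
  simp only [occSeq, pow_zero, one_mul]
  try ring

lemma occ_eq_occStar (hP : IsKernel P) (hpol : IsPolicy pol) (hρ : IsPMF ρ₀)
    (hγ0 : 0 < γ) (hγ1 : γ < 1) {d : S → A → ℝ} (hd : IsOcc P pol ρ₀ γ d) :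
    ∀ s a, d s a = occStar P pol ρ₀ γ s a := by
  have hstar := occStar_isOcc hP hpol hρ hγ0 hγ1
  set e : S × A → ℝ := fun x => d x.1 x.2 - occStar P pol ρ₀ γ x.1 x.2 with he
  have hee : ∀ x : S × A, e x = γ * (pol x.1 x.2 * ∑ y : S × A, e y * P y.1 y.2 x.1) := by
    intro x
    simp only [he]
    rw [hd x.1 x.2, hstar x.1 x.2]
    have : ∑ y : S × A, (d y.1 y.2 - occStar P pol ρ₀ γ y.1 y.2) * P y.1 y.2 x.1
        = (∑ y : S × A, d y.1 y.2 * P y.1 y.2 x.1)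
          - ∑ y : S × A, occStar P pol ρ₀ γ y.1 y.2 * P y.1 y.2 x.1 := by
      rw [← Finset.sum_sub_distrib]
      apply Finset.sum_congr rfl; intro y _; ring
    rw [this]
    ring
  have hcontr : ∑ x : S × A, |e x| ≤ γ * ∑ x : S × A, |e x| := by
    calc ∑ x : S × A, |e x|
        = ∑ x : S × A, γ * (pol x.1 x.2 * |∑ y : S × A, e y * P y.1 y.2 x.1|) := by
          apply Finset.sum_congr rfl
          intro x _
          rw [hee x, abs_mul, abs_mul, abs_of_nonneg hγ0.le,
            abs_of_nonneg ((hpol x.1).1 x.2)]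
      _ ≤ ∑ x : S × A, γ * (pol x.1 x.2 * ∑ y : S × A, |e y| * P y.1 y.2 x.1) := by
          apply Finset.sum_le_sum
          intro x _
          apply mul_le_mul_of_nonneg_left _ hγ0.le
          apply mul_le_mul_of_nonneg_left _ ((hpol x.1).1 x.2)
          calc |∑ y : S × A, e y * P y.1 y.2 x.1| ≤ ∑ y : S × A, |e y * P y.1 y.2 x.1| :=
                Finset.abs_sum_le_sum_abs _ _
            _ = ∑ y : S × A, |e y| * P y.1 y.2 x.1 := by
                apply Finset.sum_congr rfl
                intro y _
                rw [abs_mul, abs_of_nonneg ((hP y.1 y.2).1 x.1)]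
      _ = γ * ∑ x : S × A, pol x.1 x.2 * ∑ y : S × A, |e y| * P y.1 y.2 x.1 := by
          rw [Finset.mul_sum]
      _ ≤ γ * ∑ x : S × A, |e x| := by
          apply mul_le_mul_of_nonneg_left _ hγ0.le
          calc ∑ x : S × A, pol x.1 x.2 * ∑ y : S × A, |e y| * P y.1 y.2 x.1
              = ∑ s, ∑ a, pol s a * ∑ y : S × A, |e y| * P y.1 y.2 s := by
                rw [Fintype.sum_prod_type]
            _ = ∑ s, (∑ a, pol s a) * ∑ y : S × A, |e y| * P y.1 y.2 s := by
                simp [Finset.sum_mul]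
            _ = ∑ s, ∑ y : S × A, |e y| * P y.1 y.2 s := by
                apply Finset.sum_congr rfl; intro s _; rw [(hpol s).2, one_mul]
            _ = ∑ y : S × A, |e y| * ∑ s, P y.1 y.2 s := by
                rw [Finset.sum_comm]
                apply Finset.sum_congr rfl; intro y _; rw [Finset.mul_sum]
            _ = ∑ y : S × A, |e y| := by
                apply Finset.sum_congr rfl; intro y _; rw [(hP y.1 y.2).2, mul_one]
            _ ≤ ∑ x : S × A, |e x| := le_refl _
  have habs0 : ∑ x : S × A, |e x| = 0 := by
    nlinarith [Finset.sum_nonneg (fun (x : S × A) (_ : x ∈ Finset.univ) => abs_nonneg (e x))]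
  intro s a
  have : |e (s, a)| = 0 := by
    have h := (Finset.sum_eq_zero_iff_of_nonneg
      (fun (x : S × A) (_ : x ∈ Finset.univ) => abs_nonneg (e x))).1 habs0 (s,a) (mem_univ _)
    exact h
  have := abs_eq_zero.1 this
  simp only [he] at this
  linarith [this]

lemma occ_nonneg (hP : IsKernel P) (hpol : IsPolicy pol) (hρ : IsPMF ρ₀)
    (hγ0 : 0 < γ) (hγ1 : γ < 1) {d : S → A → ℝ} (hd : IsOcc P pol ρ₀ γ d) :
    ∀ s a, 0 ≤ d s a := by
  intro s a
  rw [occ_eq_occStar hP hpol hρ hγ0 hγ1 hd s a, occStar]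
  apply tsum_nonneg
  intro k
  exact mul_nonneg (pow_nonneg hγ0.le k) (occSeq_nonneg hP hpol hρ k (s,a))

lemma occ_mass (hP : IsKernel P) (hpol : IsPolicy pol) (hρ : IsPMF ρ₀)
    (hγ0 : 0 < γ) (hγ1 : γ < 1) {d : S → A → ℝ} (hd : IsOcc P pol ρ₀ γ d) :
    ∑ x : S × A, d x.1 x.2 = 1 / (1 - γ) := by
  have key : ∑ x : S × A, d x.1 x.2 = 1 + γ * ∑ x : S × A, d x.1 x.2 := by
    calc ∑ x : S × A, d x.1 x.2 = ∑ s, ∑ a, d s a := by rw [Fintype.sum_prod_type]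
      _ = ∑ s, ∑ a, pol s a * (ρ₀ s + γ * ∑ y : S × A, d y.1 y.2 * P y.1 y.2 s) := by
          apply Finset.sum_congr rfl; intro s _
          apply Finset.sum_congr rfl; intro a _
          exact hd s a
      _ = ∑ s, (ρ₀ s + γ * ∑ y : S × A, d y.1 y.2 * P y.1 y.2 s) := by
          apply Finset.sum_congr rfl; intro s _
          rw [← Finset.sum_mul, (hpol s).2, one_mul]
      _ = (∑ s, ρ₀ s) + γ * ∑ s, ∑ y : S × A, d y.1 y.2 * P y.1 y.2 s := by
          rw [Finset.sum_add_distrib, Finset.mul_sum]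
      _ = 1 + γ * ∑ x : S × A, d x.1 x.2 := by
          rw [hρ.2]
          congr 1
          congr 1
          rw [Finset.sum_comm]
          calc ∑ y : S × A, ∑ s, d y.1 y.2 * P y.1 y.2 s
              = ∑ y : S × A, d y.1 y.2 * ∑ s, P y.1 y.2 s := by
                apply Finset.sum_congr rfl; intro y _; rw [Finset.mul_sum]
            _ = ∑ y : S × A, d y.1 y.2 := by
                apply Finset.sum_congr rfl; intro y _; rw [(hP y.1 y.2).2, mul_one]
  have h1γ : (1:ℝ) - γ ≠ 0 := by linarith
  field_simp
  linarith [key]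

end MDP
section Pair
variable {S A : Type*} [Fintype S] [Fintype A]
variable {P : S → A → S → ℝ} {pol : S → A → ℝ} {γ : ℝ} {ρ₀ : S → ℝ}

/-- adjoint pairing: if `W` solves the Bellman-type equation with per-step term `f`,
then `⟨ρ₀, W⟩ = ⟨d, f⟩`. -/
lemma occ_pairing (hP : IsKernel P) (hpol : IsPolicy pol)
    {d : S → A → ℝ} (hd : IsOcc P pol ρ₀ γ d) (f : S → A → ℝ) (W : S → ℝ)
    (hW : ∀ s, W s = ∑ a, pol s a * (f s a + γ * ∑ s', P s a s' * W s')) :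
    ∑ s, ρ₀ s * W s = ∑ x : S × A, d x.1 x.2 * f x.1 x.2 := by
  set μ : S → ℝ := fun s => ρ₀ s + γ * ∑ y : S × A, d y.1 y.2 * P y.1 y.2 s with hμ
  have hdμ : ∀ s a, d s a = pol s a * μ s := fun s a => hd s a
  -- T = ∑_{s,a} d (f + γ ∑ P W)
  have hT1 : ∑ x : S × A, d x.1 x.2 * (f x.1 x.2 + γ * ∑ s', P x.1 x.2 s' * W s')
      = ∑ s, μ s * W s := by
    rw [Fintype.sum_prod_type]
    apply Finset.sum_congr rfl
    intro s _
    calc ∑ a, d s a * (f s a + γ * ∑ s', P s a s' * W s')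
        = ∑ a, μ s * (pol s a * (f s a + γ * ∑ s', P s a s' * W s')) := by
          apply Finset.sum_congr rfl; intro a _; rw [hdμ s a]; ring
      _ = μ s * ∑ a, pol s a * (f s a + γ * ∑ s', P s a s' * W s') := by
          rw [Finset.mul_sum]
      _ = μ s * W s := by rw [← hW s]
  have hT2 : ∑ s, μ s * W s
      = (∑ s, ρ₀ s * W s) + γ * ∑ y : S × A, d y.1 y.2 * ∑ s, P y.1 y.2 s * W s := by
    simp only [hμ]
    calc ∑ s, (ρ₀ s + γ * ∑ y : S × A, d y.1 y.2 * P y.1 y.2 s) * W s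
        = ∑ s, (ρ₀ s * W s + γ * ((∑ y : S × A, d y.1 y.2 * P y.1 y.2 s) * W s)) := by
          apply Finset.sum_congr rfl; intro s _; ring
      _ = (∑ s, ρ₀ s * W s) + γ * ∑ s, (∑ y : S × A, d y.1 y.2 * P y.1 y.2 s) * W s := by
          rw [Finset.sum_add_distrib, Finset.mul_sum]
      _ = (∑ s, ρ₀ s * W s) + γ * ∑ y : S × A, d y.1 y.2 * ∑ s, P y.1 y.2 s * W s := by
          congr 1
          congr 1
          calc ∑ s, (∑ y : S × A, d y.1 y.2 * P y.1 y.2 s) * W s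
              = ∑ s, ∑ y : S × A, d y.1 y.2 * (P y.1 y.2 s * W s) := by
                apply Finset.sum_congr rfl; intro s _
                rw [Finset.sum_mul]
                apply Finset.sum_congr rfl; intro y _; ring
            _ = ∑ y : S × A, ∑ s, d y.1 y.2 * (P y.1 y.2 s * W s) := Finset.sum_comm
            _ = ∑ y : S × A, d y.1 y.2 * ∑ s, P y.1 y.2 s * W s := by
                apply Finset.sum_congr rfl; intro y _; rw [Finset.mul_sum]
  have hT3 : ∑ x : S × A, d x.1 x.2 * (f x.1 x.2 + γ * ∑ s', P x.1 x.2 s' * W s')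
      = (∑ x : S × A, d x.1 x.2 * f x.1 x.2)
        + γ * ∑ y : S × A, d y.1 y.2 * ∑ s, P y.1 y.2 s * W s := by
    calc ∑ x : S × A, d x.1 x.2 * (f x.1 x.2 + γ * ∑ s', P x.1 x.2 s' * W s')
        = ∑ x : S × A, (d x.1 x.2 * f x.1 x.2
            + γ * (d x.1 x.2 * ∑ s', P x.1 x.2 s' * W s')) := by
          apply Finset.sum_congr rfl; intro x _; ring
      _ = (∑ x : S × A, d x.1 x.2 * f x.1 x.2)
            + γ * ∑ x : S × A, d x.1 x.2 * ∑ s, P x.1 x.2 s * W s := by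
          rw [Finset.sum_add_distrib, Finset.mul_sum]
  linarith [hT1, hT2, hT3]

/-- value difference identity -/
lemma value_diff (hP : IsKernel P) (hpol : IsPolicy pol)
    {Phat : S → A → S → ℝ} {r : S → A → ℝ}
    {d : S → A → ℝ} (hd : IsOcc P pol ρ₀ γ d)
    {V Vhat : S → ℝ} (hV : IsValue P pol r γ V) (hVhat : IsValue Phat pol r γ Vhat) :
    (∑ s, ρ₀ s * V s) - ∑ s, ρ₀ s * Vhat s
      = ∑ x : S × A, d x.1 x.2 *
          (γ * ∑ s', (P x.1 x.2 s' - Phat x.1 x.2 s') * Vhat s') := by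
  set W : S → ℝ := fun s => V s - Vhat s with hWdef
  set f : S → A → ℝ := fun s a => γ * ∑ s', (P s a s' - Phat s a s') * Vhat s' with hfdef
  have hW : ∀ s, W s = ∑ a, pol s a * (f s a + γ * ∑ s', P s a s' * W s') := by
    intro s
    simp only [hWdef]
    rw [hV s, hVhat s, ← Finset.sum_sub_distrib]
    apply Finset.sum_congr rfl
    intro a _
    simp only [hfdef]
    have e1 : ∑ s', (P s a s' - Phat s a s') * Vhat s'
        = (∑ s', P s a s' * Vhat s') - ∑ s', Phat s a s' * Vhat s' := by
      rw [← Finset.sum_sub_distrib]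
      apply Finset.sum_congr rfl; intro s' _; ring
    have e2 : ∑ s', P s a s' * (V s' - Vhat s')
        = (∑ s', P s a s' * V s') - ∑ s', P s a s' * Vhat s' := by
      rw [← Finset.sum_sub_distrib]
      apply Finset.sum_congr rfl; intro s' _; ring
    rw [e1, e2]
    ring
  have := occ_pairing hP hpol hd f W hW
  rw [← this]
  rw [← Finset.sum_sub_distrib]
  apply Finset.sum_congr rfl; intro s _; ring

/-- centering bound -/
lemma center_bound {X : Type*} [Fintype X] {p q V : X → ℝ} {B : ℝ}
    (hp : IsPMF p) (hq : IsPMF q) (hV : ∀ x, 0 ≤ V x ∧ V x ≤ B) :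
    |∑ x, (p x - q x) * V x| ≤ (B / 2) * ∑ x, |p x - q x| := by
  have hzero : ∑ x, (p x - q x) = 0 := by
    rw [Finset.sum_sub_distrib, hp.2, hq.2]; ring
  have hcenter : ∑ x, (p x - q x) * V x = ∑ x, (p x - q x) * (V x - B/2) := by
    have h : ∑ x, (p x - q x) * (V x - B/2)
        = (∑ x, (p x - q x) * V x) - (B/2) * ∑ x, (p x - q x) := by
      rw [Finset.mul_sum, ← Finset.sum_sub_distrib]
      apply Finset.sum_congr rfl; intro x _; ring
    rw [h, hzero]; ring
  rw [hcenter]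
  calc |∑ x, (p x - q x) * (V x - B/2)| ≤ ∑ x, |(p x - q x) * (V x - B/2)| :=
        Finset.abs_sum_le_sum_abs _ _
    _ ≤ ∑ x, |p x - q x| * (B/2) := by
        apply Finset.sum_le_sum
        intro x _
        rw [abs_mul]
        apply mul_le_mul_of_nonneg_left _ (abs_nonneg _)
        rw [abs_le]
        exact ⟨by linarith [(hV x).1, (hV x).2], by linarith [(hV x).1, (hV x).2]⟩
    _ = (B/2) * ∑ x, |p x - q x| := by rw [← Finset.sum_mul]; ring

/-- Jensen / Cauchy-Schwarz for sqrt -/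
lemma jensen_sqrt {X : Type*} [Fintype X] (w v : X → ℝ) (hw : ∀ x, 0 ≤ w x)
    (hw1 : ∑ x, w x ≤ 1) (hv : ∀ x, 0 ≤ v x) :
    ∑ x, w x * Real.sqrt (v x) ≤ Real.sqrt (∑ x, w x * v x) := by
  have hCS := Finset.sum_mul_sq_le_sq_mul_sq Finset.univ (fun x => Real.sqrt (w x))
    (fun x => Real.sqrt (w x) * Real.sqrt (v x))
  have e1 : ∀ x, Real.sqrt (w x) * (Real.sqrt (w x) * Real.sqrt (v x))
      = w x * Real.sqrt (v x) := by
    intro x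
    rw [← mul_assoc, Real.mul_self_sqrt (hw x)]
  have e2 : ∀ x, Real.sqrt (w x) ^ 2 = w x := fun x => Real.sq_sqrt (hw x)
  have e3 : ∀ x, (Real.sqrt (w x) * Real.sqrt (v x)) ^ 2 = w x * v x := by
    intro x
    rw [mul_pow, Real.sq_sqrt (hw x), Real.sq_sqrt (hv x)]
  rw [Finset.sum_congr rfl (fun x _ => e1 x), Finset.sum_congr rfl (fun x _ => e2 x),
    Finset.sum_congr rfl (fun x _ => e3 x)] at hCS
  have hnn : 0 ≤ ∑ x, w x * Real.sqrt (v x) :=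
    Finset.sum_nonneg fun x _ => mul_nonneg (hw x) (Real.sqrt_nonneg _)
  have hwv : 0 ≤ ∑ x, w x * v x :=
    Finset.sum_nonneg fun x _ => mul_nonneg (hw x) (hv x)
  rw [← Real.sqrt_sq hnn]
  apply Real.sqrt_le_sqrt
  calc (∑ x, w x * Real.sqrt (v x)) ^ 2 ≤ (∑ x, w x) * ∑ x, w x * v x := hCS
    _ ≤ 1 * ∑ x, w x * v x := mul_le_mul_of_nonneg_right hw1 hwv
    _ = ∑ x, w x * v x := one_mul _

end Pair

/-- **Online-to-minimax guarantee for simulator learning.** If the model player's models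
`Phat t` achieve regret `Regret_T` for the occupancy-weighted KL losses against the
adversarially chosen policies, then the average value gap is controlled by the best
in-class average loss plus the per-round regret. -/
theorem online_to_minimax
    {S A : Type*} [Fintype S] [Fintype A] [Nonempty S] [Nonempty A]
    (P : S → A → S → ℝ) (hP : IsKernel P)
    (r : S → A → ℝ) (Rmax : ℝ) (hr : ∀ s a, 0 ≤ r s a ∧ r s a ≤ Rmax)
    (γ : ℝ) (hγ0 : 0 < γ) (hγ1 : γ < 1)
    (ρ₀ : S → ℝ) (hρ : IsPMF ρ₀)
    (T : ℕ) (hT : 0 < T)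
    (M : Set (S → A → S → ℝ)) (hM : M.Nonempty) (hMker : ∀ Q ∈ M, IsKernel Q)
    (pol : Fin T → S → A → ℝ) (hpol : ∀ t, IsPolicy (pol t))
    (Phat : Fin T → S → A → S → ℝ) (hPhatM : ∀ t, Phat t ∈ M)
    -- all losses of models in `M ∪ {Phat 1, …, Phat T}` are finite (absolute continuity)
    (habs : ∀ Q, (Q ∈ M ∨ ∃ t, Q = Phat t) → ∀ s a s', 0 < P s a s' → 0 < Q s a s')
    (dpol : Fin T → S → A → ℝ) (hd : ∀ t, IsOcc P (pol t) ρ₀ γ (dpol t))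
    (V : Fin T → S → ℝ) (hV : ∀ t, IsValue P (pol t) r γ (V t))
    (Vhat : Fin T → S → ℝ) (hVhat : ∀ t, IsValue (Phat t) (pol t) r γ (Vhat t)) :
    (1 / (T : ℝ)) * ∑ t, |(∑ s, ρ₀ s * V t s) - ∑ s, ρ₀ s * Vhat t s| ≤
      γ * Rmax / (1 - γ) ^ 2 *
        Real.sqrt ((1 / 2) *
          (sInf {y | ∃ Q ∈ M, y = (1 / (T : ℝ)) * ∑ t, ∑ x : S × A,
                (1 - γ) * dpol t x.1 x.2 * klF (P x.1 x.2) (Q x.1 x.2)} +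
            ((∑ t, ∑ x : S × A,
                (1 - γ) * dpol t x.1 x.2 * klF (P x.1 x.2) (Phat t x.1 x.2)) -
              sInf {y | ∃ Q ∈ M, y = ∑ t, ∑ x : S × A,
                (1 - γ) * dpol t x.1 x.2 * klF (P x.1 x.2) (Q x.1 x.2)}) / (T : ℝ))) := by
  classical
  have h1γ : (0:ℝ) < 1 - γ := by linarith
  have h1γ' : (1:ℝ) - γ ≠ 0 := ne_of_gt h1γ
  have hTpos : (0:ℝ) < (T:ℝ) := by exact_mod_cast hT
  have hRmax : 0 ≤ Rmax := le_trans (hr (Classical.arbitrary S) (Classical.arbitrary A)).1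
    ((hr (Classical.arbitrary S) (Classical.arbitrary A)).2)
  set c : ℝ := γ * Rmax / (1 - γ) ^ 2 with hc
  have hcnn : 0 ≤ c := div_nonneg (mul_nonneg hγ0.le hRmax) (by positivity)
  have hker : ∀ t, IsKernel (Phat t) := fun t => hMker _ (hPhatM t)
  have hVb : ∀ t s, 0 ≤ Vhat t s ∧ Vhat t s ≤ Rmax / (1 - γ) := fun t =>
    value_bounds (hker t) (hpol t) hr hγ0 hγ1 (hVhat t)
  have hdnn : ∀ t s a, 0 ≤ dpol t s a := fun t => occ_nonneg hP (hpol t) hρ hγ0 hγ1 (hd t)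
  have hmass : ∀ t, ∑ x : S × A, dpol t x.1 x.2 = 1 / (1 - γ) := fun t =>
    occ_mass hP (hpol t) hρ hγ0 hγ1 (hd t)
  have hklnn : ∀ (t : Fin T) (x : S × A), 0 ≤ klF (P x.1 x.2) (Phat t x.1 x.2) := fun t x =>
    klF_nonneg (hP x.1 x.2) (hker t x.1 x.2)
      (fun s' => habs (Phat t) (Or.inr ⟨t, rfl⟩) x.1 x.2 s')
  have hl1 : ∀ (t : Fin T) (x : S × A), ∑ s', |P x.1 x.2 s' - Phat t x.1 x.2 s'|
      ≤ Real.sqrt (2 * klF (P x.1 x.2) (Phat t x.1 x.2)) := by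
    intro t x
    have hpk := pinsker (hP x.1 x.2) (hker t x.1 x.2)
      (fun s' => habs (Phat t) (Or.inr ⟨t, rfl⟩) x.1 x.2 s')
    have hnn : 0 ≤ ∑ s', |P x.1 x.2 s' - Phat t x.1 x.2 s'| :=
      Finset.sum_nonneg fun _ _ => abs_nonneg _
    calc ∑ s', |P x.1 x.2 s' - Phat t x.1 x.2 s'|
        = Real.sqrt ((∑ s', |P x.1 x.2 s' - Phat t x.1 x.2 s'|) ^ 2) :=
          (Real.sqrt_sq hnn).symm
      _ ≤ Real.sqrt (2 * klF (P x.1 x.2) (Phat t x.1 x.2)) := Real.sqrt_le_sqrt hpk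
  -- per-round bound
  have hΔ : ∀ t : Fin T, |(∑ s, ρ₀ s * V t s) - ∑ s, ρ₀ s * Vhat t s|
      ≤ γ * (Rmax / (1 - γ) / 2) * ∑ x : S × A, dpol t x.1 x.2 *
          Real.sqrt (2 * klF (P x.1 x.2) (Phat t x.1 x.2)) := by
    intro t
    rw [value_diff hP (hpol t) (hd t) (hV t) (hVhat t)]
    have hstep : ∀ x : S × A, |dpol t x.1 x.2 *
        (γ * ∑ s', (P x.1 x.2 s' - Phat t x.1 x.2 s') * Vhat t s')|
        ≤ dpol t x.1 x.2 * (γ * ((Rmax / (1 - γ) / 2) *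
            Real.sqrt (2 * klF (P x.1 x.2) (Phat t x.1 x.2)))) := by
      intro x
      rw [abs_mul, abs_mul, abs_of_nonneg (hdnn t x.1 x.2), abs_of_nonneg hγ0.le]
      apply mul_le_mul_of_nonneg_left _ (hdnn t x.1 x.2)
      apply mul_le_mul_of_nonneg_left _ hγ0.le
      calc |∑ s', (P x.1 x.2 s' - Phat t x.1 x.2 s') * Vhat t s'|
          ≤ (Rmax / (1 - γ) / 2) * ∑ s', |P x.1 x.2 s' - Phat t x.1 x.2 s'| := by
            have := center_bound (hP x.1 x.2) (hker t x.1 x.2) (hVb t)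
            convert this using 2
        _ ≤ (Rmax / (1 - γ) / 2) * Real.sqrt (2 * klF (P x.1 x.2) (Phat t x.1 x.2)) := by
            apply mul_le_mul_of_nonneg_left (hl1 t x)
            positivity
    calc |∑ x : S × A, dpol t x.1 x.2 *
          (γ * ∑ s', (P x.1 x.2 s' - Phat t x.1 x.2 s') * Vhat t s')|
        ≤ ∑ x : S × A, |dpol t x.1 x.2 *
            (γ * ∑ s', (P x.1 x.2 s' - Phat t x.1 x.2 s') * Vhat t s')| :=
          Finset.abs_sum_le_sum_abs _ _
      _ ≤ ∑ x : S × A, dpol t x.1 x.2 * (γ * ((Rmax / (1 - γ) / 2) *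
            Real.sqrt (2 * klF (P x.1 x.2) (Phat t x.1 x.2)))) :=
          Finset.sum_le_sum fun x _ => hstep x
      _ = γ * (Rmax / (1 - γ) / 2) * ∑ x : S × A, dpol t x.1 x.2 *
            Real.sqrt (2 * klF (P x.1 x.2) (Phat t x.1 x.2)) := by
          rw [Finset.mul_sum]
          exact Finset.sum_congr rfl fun x _ => by ring
  -- Jensen over the product index
  set w : Fin T × (S × A) → ℝ :=
    fun p => (1 / (T:ℝ)) * ((1 - γ) * dpol p.1 p.2.1 p.2.2) with hw
  set v : Fin T × (S × A) → ℝ :=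
    fun p => 2 * klF (P p.2.1 p.2.2) (Phat p.1 p.2.1 p.2.2) with hv
  have hwnn : ∀ p, 0 ≤ w p := fun p =>
    mul_nonneg (by positivity) (mul_nonneg h1γ.le (hdnn p.1 p.2.1 p.2.2))
  have hvnn : ∀ p, 0 ≤ v p := fun p => mul_nonneg two_pos.le (hklnn p.1 p.2)
  have hwsum : ∑ p : Fin T × (S × A), w p = 1 := by
    rw [Fintype.sum_prod_type]
    have h1 : ∀ t : Fin T, ∑ x : S × A, w (t, x) = 1 / (T:ℝ) := by
      intro t
      simp only [hw]
      rw [← Finset.mul_sum, ← Finset.mul_sum, hmass t]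
      field_simp
    rw [Finset.sum_congr rfl (fun t _ => h1 t), Finset.sum_const, Finset.card_univ,
      Fintype.card_fin, nsmul_eq_mul]
    field_simp
  have hjen := jensen_sqrt w v hwnn hwsum.le hvnn
  set Stot : ℝ := ∑ t, ∑ x : S × A,
      (1 - γ) * dpol t x.1 x.2 * klF (P x.1 x.2) (Phat t x.1 x.2) with hStot
  have hwv : ∑ p : Fin T × (S × A), w p * v p = 4 * ((1/2) * ((1 / (T:ℝ)) * Stot)) := by
    rw [Fintype.sum_prod_type, hStot]
    have h2 : ∀ t : Fin T, ∑ x : S × A, w (t, x) * v (t, x)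
        = (2 / (T:ℝ)) * ∑ x : S × A,
            (1 - γ) * dpol t x.1 x.2 * klF (P x.1 x.2) (Phat t x.1 x.2) := by
      intro t
      rw [Finset.mul_sum]
      exact Finset.sum_congr rfl fun x _ => by simp only [hw, hv]; ring
    rw [Finset.sum_congr rfl (fun t _ => h2 t), ← Finset.mul_sum]
    ring
  have hsqrt4 : Real.sqrt 4 = 2 := by
    rw [show (4:ℝ) = 2 ^ 2 by norm_num, Real.sqrt_sq (by norm_num : (0:ℝ) ≤ 2)]
  -- simplify the sInf expression
  have hsinf : sInf {y | ∃ Q ∈ M, y = (1 / (T : ℝ)) * ∑ t, ∑ x : S × A,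
        (1 - γ) * dpol t x.1 x.2 * klF (P x.1 x.2) (Q x.1 x.2)}
      = (1 / (T:ℝ)) * sInf {y | ∃ Q ∈ M, y = ∑ t, ∑ x : S × A,
        (1 - γ) * dpol t x.1 x.2 * klF (P x.1 x.2) (Q x.1 x.2)} := by
    have hset : {y | ∃ Q ∈ M, y = (1 / (T : ℝ)) * ∑ t, ∑ x : S × A,
          (1 - γ) * dpol t x.1 x.2 * klF (P x.1 x.2) (Q x.1 x.2)}
        = (1 / (T:ℝ)) • {y | ∃ Q ∈ M, y = ∑ t, ∑ x : S × A,
          (1 - γ) * dpol t x.1 x.2 * klF (P x.1 x.2) (Q x.1 x.2)} := by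
      ext y
      simp only [Set.mem_smul_set, Set.mem_setOf_eq, smul_eq_mul]
      constructor
      · rintro ⟨Q, hQ, rfl⟩
        exact ⟨_, ⟨Q, hQ, rfl⟩, rfl⟩
      · rintro ⟨z, ⟨Q, hQ, rfl⟩, rfl⟩
        exact ⟨Q, hQ, rfl⟩
    rw [hset, Real.sInf_smul_of_nonneg (by positivity), smul_eq_mul]
  have harg : (1/2) * (sInf {y | ∃ Q ∈ M, y = (1 / (T : ℝ)) * ∑ t, ∑ x : S × A,
        (1 - γ) * dpol t x.1 x.2 * klF (P x.1 x.2) (Q x.1 x.2)} +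
      (Stot - sInf {y | ∃ Q ∈ M, y = ∑ t, ∑ x : S × A,
        (1 - γ) * dpol t x.1 x.2 * klF (P x.1 x.2) (Q x.1 x.2)}) / (T:ℝ))
      = (1/2) * ((1 / (T:ℝ)) * Stot) := by
    rw [hsinf]
    field_simp
    try ring
  -- final chain
  calc (1 / (T : ℝ)) * ∑ t, |(∑ s, ρ₀ s * V t s) - ∑ s, ρ₀ s * Vhat t s|
      ≤ (1 / (T : ℝ)) * ∑ t, γ * (Rmax / (1 - γ) / 2) * ∑ x : S × A, dpol t x.1 x.2 *
          Real.sqrt (2 * klF (P x.1 x.2) (Phat t x.1 x.2)) := by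
        apply mul_le_mul_of_nonneg_left (Finset.sum_le_sum fun t _ => hΔ t) (by positivity)
    _ = (c / 2) * ∑ p : Fin T × (S × A), w p * Real.sqrt (v p) := by
        rw [Fintype.sum_prod_type, Finset.mul_sum, Finset.mul_sum]
        apply Finset.sum_congr rfl
        intro t _
        rw [Finset.mul_sum, Finset.mul_sum, Finset.mul_sum]
        apply Finset.sum_congr rfl
        intro x _
        simp only [hw, hv, hc]
        field_simp
    _ ≤ (c / 2) * Real.sqrt (∑ p : Fin T × (S × A), w p * v p) :=
        mul_le_mul_of_nonneg_left hjen (by positivity)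
    _ = c * Real.sqrt ((1/2) * ((1 / (T:ℝ)) * Stot)) := by
        rw [hwv, Real.sqrt_mul (by norm_num : (0:ℝ) ≤ 4), hsqrt4]
        ring
    _ = _ := by
        rw [← harg]
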